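/- Let n ≥ 0 and b₀,…,bₙ, λ₀,…,λₙ be positive integers, and let m(n) = λ₀ + ⋯ + λₙ. Then the continuant of the word consisting of b₀ repeated λ₀ times, then b₁ repeated λ₁ times, …, then bₙ repeated λₙ times satisfies ∑_{k=0}^{n} λ_k log b_k ≤ log K_{m(n)}(b₀^{λ₀},…,bₙ^{λₙ}) ≤ 2 ∑_{k=0}^{n} λ_k log(b_k + 1). -/

import Mathlib

open Filter Finset Polynomial

/-- Continuant `K_n(a 1, …, a n)`: `K 0 = 1`, `K 1 = a 1`,
`K (n+2) = a (n+2) * K (n+1) + K n`. -/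
def contK (a : ℕ → ℕ) : ℕ → ℕ
  | 0 => 1
  | 1 => a 1
  | (n+2) => a (n+2) * contK a (n+1) + contK a n

lemma prod_le_contK (a : ℕ → ℕ) : ∀ m, (∏ i ∈ Finset.Icc 1 m, a i) ≤ contK a m
  | 0 => by simp [contK]
  | 1 => by simp [contK]
  | (m+2) => by
    have h1 := prod_le_contK a (m+1)
    rw [Finset.prod_Icc_succ_top (by omega)]
    calc (∏ i ∈ Finset.Icc 1 (m+1), a i) * a (m+2)
        ≤ contK a (m+1) * a (m+2) := Nat.mul_le_mul_right _ h1
      _ ≤ a (m+2) * contK a (m+1) + contK a m := by rw [Nat.mul_comm]; omega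
      _ = contK a (m+2) := rfl

lemma contK_le_prod (a : ℕ → ℕ) : ∀ m, contK a m ≤ ∏ i ∈ Finset.Icc 1 m, (a i + 1)
  | 0 => by simp [contK]
  | 1 => by simp [contK]
  | (m+2) => by
    have h1 := contK_le_prod a (m+1)
    have h0 := contK_le_prod a m
    have hmono : (∏ i ∈ Finset.Icc 1 m, (a i + 1)) ≤ ∏ i ∈ Finset.Icc 1 (m+1), (a i + 1) := by
      rw [Finset.prod_Icc_succ_top (by omega) (f := fun i => a i + 1)]
      exact Nat.le_mul_of_pos_right _ (by omega)
    rw [Finset.prod_Icc_succ_top (by omega) (f := fun i => a i + 1)]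
    show a (m+2) * contK a (m+1) + contK a m ≤ _
    calc a (m+2) * contK a (m+1) + contK a m
        ≤ a (m+2) * (∏ i ∈ Finset.Icc 1 (m+1), (a i + 1)) +
            ∏ i ∈ Finset.Icc 1 (m+1), (a i + 1) :=
          Nat.add_le_add (Nat.mul_le_mul_left _ h1) (h0.trans hmono)
      _ = (∏ i ∈ Finset.Icc 1 (m+1), (a i + 1)) * (a (m+2) + 1) := by ring

theorem continuant_block_log_bounds (n : ℕ) (b lam : ℕ → ℕ)
    (hb : ∀ k, 0 < b k) (hlam : ∀ k, 0 < lam k) (a : ℕ → ℕ)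
    (hblock : ∀ j i, (∑ k ∈ Finset.range j, lam k) < i →
      i ≤ ∑ k ∈ Finset.range (j + 1), lam k → a i = b j) :
    (∑ k ∈ Finset.range (n + 1), (lam k : ℝ) * Real.log (b k)) ≤
        Real.log (contK a (∑ k ∈ Finset.range (n + 1), lam k)) ∧
      Real.log (contK a (∑ k ∈ Finset.range (n + 1), lam k)) ≤
        2 * ∑ k ∈ Finset.range (n + 1), (lam k : ℝ) * Real.log (b k + 1) := by
  have hex : ∀ N i, 0 < i → i ≤ ∑ k ∈ Finset.range (N+1), lam k →
      ∃ j, (∑ k ∈ Finset.range j, lam k) < i ∧ i ≤ ∑ k ∈ Finset.range (j+1), lam k := by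
    intro N
    induction N with
    | zero => exact fun i hi h => ⟨0, by simpa using hi, h⟩
    | succ N ih =>
      intro i hi h
      by_cases hc : i ≤ ∑ k ∈ Finset.range (N+1), lam k
      · exact ih i hi hc
      · exact ⟨N+1, by omega, h⟩
  have ha : ∀ i ∈ Finset.Ioc 0 (∑ k ∈ Finset.range (n+1), lam k), 0 < a i := by
    intro i hi
    rw [Finset.mem_Ioc] at hi
    obtain ⟨j, hj1, hj2⟩ := hex n i hi.1 hi.2
    rw [hblock j i hj1 hj2]
    exact hb j
  have hIcc : Finset.Icc 1 (∑ k ∈ Finset.range (n+1), lam k) =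
      Finset.Ioc 0 (∑ k ∈ Finset.range (n+1), lam k) := by
        ext x; simp only [Finset.mem_Icc, Finset.mem_Ioc]; omega
  have hone : ∀ (F : ℕ → ℝ) k,
      ∑ i ∈ Finset.Ioc (∑ t ∈ Finset.range k, lam t) (∑ t ∈ Finset.range (k+1), lam t),
        F (a i) = (lam k : ℝ) * F (b k) := by
    intro F k
    rw [Finset.sum_congr rfl fun i hi => by
      rw [hblock k i (Finset.mem_Ioc.1 hi).1 (Finset.mem_Ioc.1 hi).2]]
    rw [Finset.sum_const, Nat.card_Ioc, Finset.sum_range_succ, Nat.add_sub_cancel_left,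
      nsmul_eq_mul]
  have hsum : ∀ (F : ℕ → ℝ) N,
      ∑ i ∈ Finset.Ioc 0 (∑ k ∈ Finset.range (N+1), lam k), F (a i) =
        ∑ k ∈ Finset.range (N+1), (lam k : ℝ) * F (b k) := by
    intro F N
    induction N with
    | zero => simpa using hone F 0
    | succ N ih =>
      rw [Finset.sum_range_succ (f := fun k => (lam k : ℝ) * F (b k)), ← ih, ← hone F (N+1),
        Finset.sum_Ioc_consecutive _ (Nat.zero_le _)
          (Finset.sum_le_sum_of_subset (Finset.range_subset_range.2 (by omega)))]
  have hK1 : (∏ i ∈ Finset.Ioc 0 (∑ k ∈ Finset.range (n+1), lam k), a i) ≤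
      contK a (∑ k ∈ Finset.range (n+1), lam k) := hIcc ▸ prod_le_contK a _
  have hK2 : contK a (∑ k ∈ Finset.range (n+1), lam k) ≤
      ∏ i ∈ Finset.Ioc 0 (∑ k ∈ Finset.range (n+1), lam k), (a i + 1) :=
    hIcc ▸ contK_le_prod a _
  have hppos : 0 < ∏ i ∈ Finset.Ioc 0 (∑ k ∈ Finset.range (n+1), lam k), a i :=
    Finset.prod_pos ha
  constructor
  · rw [← hsum (fun t : ℕ => Real.log t) n,
      ← Real.log_prod (fun i hi => by exact_mod_cast (ha i hi).ne')]
    apply Real.log_le_log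
    · exact_mod_cast hppos
    · exact_mod_cast hK1
  · have heq : Real.log ((∏ i ∈ Finset.Ioc 0 (∑ k ∈ Finset.range (n+1), lam k),
        (a i + 1) : ℕ) : ℝ) = ∑ k ∈ Finset.range (n+1), (lam k : ℝ) * Real.log (b k + 1) := by
      rw [Nat.cast_prod, Real.log_prod
        (fun i hi => by exact_mod_cast (Nat.succ_ne_zero (a i)))]
      have h := hsum (fun t : ℕ => Real.log (t + 1)) n
      push_cast at h ⊢
      exact h
    have h1 : Real.log (contK a (∑ k ∈ Finset.range (n+1), lam k)) ≤
        ∑ k ∈ Finset.range (n+1), (lam k : ℝ) * Real.log (b k + 1) := by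
      rw [← heq]
      apply Real.log_le_log
      · exact_mod_cast lt_of_lt_of_le hppos hK1
      · exact_mod_cast hK2
    have h2 : 0 ≤ ∑ k ∈ Finset.range (n+1), (lam k : ℝ) * Real.log (b k + 1) :=
      Finset.sum_nonneg fun k _ => mul_nonneg (Nat.cast_nonneg _)
        (Real.log_nonneg (le_add_of_nonneg_left (Nat.cast_nonneg _)))
    linarith
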